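/- Let K be a complete non-archimedean field and let R be a Banach K-algebra. Let P = (P₁,…,P_m) be polynomials in R[σ₁,…,σ_n,τ₁,…,τ_m] with P(σ=0,τ=0) = 0 and det((∂P_i/∂τ_j)(σ=0,τ=0)) a unit of R, and let F = (F₁,…,F_m) be the unique m-tuple of formal power series in R[[σ₁,…,σ_n]] with F(σ=0) = 0 and P(σ,F(σ)) = 0. Then F has a positive radius of convergence: writing F_i = Σ_I d_{iI} σ^I over multi-indices I ∈ ℕⁿ, there exists a real number r > 0 such that for every ε > 0 one has ‖d_{iI}‖·r^{|I|} < ε for all i and all but finitely many multi-indices I. -/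

import Mathlib

open Finsupp
open scoped Classical
set_option linter.unusedSectionVars false
set_option maxHeartbeats 1000000

namespace ImplicitAux

/-- degree of a multi-index -/
def deg {n : ℕ} (J : Fin n →₀ ℕ) : ℕ := J.sum fun _ k => k

variable {R : Type*} [NormedCommRing R] [IsUltrametricDist R] {n m : ℕ}

lemma deg_add (a b : Fin n →₀ ℕ) : deg (a + b) = deg a + deg b :=
  Finsupp.sum_add_index' (fun _ => rfl) (fun _ _ _ => rfl)

@[simp] lemma deg_zero : deg (0 : Fin n →₀ ℕ) = 0 := by simp [deg]

lemma deg_eq_zero_iff (J : Fin n →₀ ℕ) : deg J = 0 ↔ J = 0 := by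
  unfold deg
  rw [Finsupp.sum, Finset.sum_eq_zero_iff]
  constructor
  · intro h; ext k
    by_cases hk : k ∈ J.support
    · exact h k hk
    · simpa using Finsupp.notMem_support_iff.mp hk
  · rintro rfl; simp

lemma one_le_deg {J : Fin n →₀ ℕ} (h : J ≠ 0) : 1 ≤ deg J :=
  Nat.one_le_iff_ne_zero.mpr fun h0 => h ((deg_eq_zero_iff J).mp h0)

lemma apply_le_deg (J : Fin n →₀ ℕ) (k : Fin n) : J k ≤ deg J := by
  by_cases hk : k ∈ J.support
  · exact Finset.single_le_sum (f := fun x => J x) (fun _ _ => Nat.zero_le _) hk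
  · simp [Finsupp.notMem_support_iff.mp hk]

lemma prod_monomial {σ ι : Type*} (s : Finset ι) (f : ι → (σ →₀ ℕ)) :
    (∏ k ∈ s, (MvPowerSeries.monomial (f k) (1 : R))) =
      MvPowerSeries.monomial (∑ k ∈ s, f k) 1 := by
  classical
  induction s using Finset.induction_on with
  | empty =>
    simp only [Finset.prod_empty, Finset.sum_empty]
    ext J
    rw [MvPowerSeries.coeff_monomial, MvPowerSeries.coeff_one]
  | insert a s hx ih =>
    rw [Finset.prod_insert hx, Finset.sum_insert hx, ih,
      MvPowerSeries.monomial_mul_monomial, one_mul]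

lemma prod_X_pow (S : Fin n →₀ ℕ) :
    (∏ k, (MvPowerSeries.X k : MvPowerSeries (Fin n) R) ^ S k) =
      MvPowerSeries.monomial S 1 := by
  classical
  have h : ∀ k : Fin n, (MvPowerSeries.X k : MvPowerSeries (Fin n) R) ^ S k =
      MvPowerSeries.monomial (Finsupp.single k (S k)) 1 := fun k =>
    MvPowerSeries.X_pow_eq k (S k)
  simp_rw [h, prod_monomial, Finsupp.univ_sum_single]

lemma coeff_msprod_eq_zero (F : Fin m → MvPowerSeries (Fin n) R)
    (hF0 : ∀ j, MvPowerSeries.constantCoeff (F j) = 0)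
    (s : Multiset (Fin m)) :
    ∀ (J : Fin n →₀ ℕ), deg J < Multiset.card s →
      MvPowerSeries.coeff J ((s.map F).prod) = 0 := by
  classical
  induction s using Multiset.induction_on with
  | empty => intro J h; simp at h
  | cons a t ih =>
    intro J h
    rw [Multiset.map_cons, Multiset.prod_cons, MvPowerSeries.coeff_mul]
    apply Finset.sum_eq_zero
    rintro ⟨J1, J2⟩ hp
    rw [Finset.HasAntidiagonal.mem_antidiagonal] at hp
    by_cases h1 : J1 = 0
    · subst h1
      have : MvPowerSeries.coeff (0 : Fin n →₀ ℕ) (F a) = 0 := by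
        rw [MvPowerSeries.coeff_zero_eq_constantCoeff]; exact hF0 a
      simp [this]
    · have hd : deg J1 + deg J2 = deg J := by rw [← hp, deg_add]
      have h1' : 1 ≤ deg J1 := one_le_deg h1
      have hcard : Multiset.card (a ::ₘ t) = Multiset.card t + 1 := by simp
      have : deg J2 < Multiset.card t := by omega
      rw [ih J2 this, mul_zero]

lemma coeff_msprod_le (F : Fin m → MvPowerSeries (Fin n) R)
    (hF0 : ∀ j, MvPowerSeries.constantCoeff (F j) = 0)
    {C A D : ℝ} (hC0 : 0 ≤ C) (hA : 1 ≤ A) (hD1 : 1 ≤ D) (hD : ‖(1:R)‖ ≤ D)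
    (s : Multiset (Fin m)) :
    ∀ (J : Fin n →₀ ℕ),
      (∀ (j : Fin m) (J' : Fin n →₀ ℕ), deg J' + Multiset.card s ≤ deg J + 1 →
        ‖MvPowerSeries.coeff J' (F j)‖ ≤ C * A ^ deg J') →
      ‖MvPowerSeries.coeff J ((s.map F).prod)‖ ≤ D * C ^ Multiset.card s * A ^ deg J := by
  classical
  have hA0 : (0:ℝ) < A := lt_of_lt_of_le one_pos hA
  have hD0 : (0:ℝ) ≤ D := le_trans zero_le_one hD1
  induction s using Multiset.induction_on with
  | empty =>
    intro J _
    simp only [Multiset.map_zero, Multiset.prod_zero, Multiset.card_zero, pow_zero, mul_one]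
    rw [MvPowerSeries.coeff_one]
    by_cases hJ : J = 0
    · rw [if_pos hJ]
      subst hJ
      simp only [deg_zero, pow_zero, mul_one]
      exact hD
    · rw [if_neg hJ]
      simp only [norm_zero]
      positivity
  | cons a t ih =>
    intro J hH
    rw [Multiset.map_cons, Multiset.prod_cons, MvPowerSeries.coeff_mul]
    apply IsUltrametricDist.norm_sum_le_of_forall_le_of_nonneg (by positivity)
    rintro ⟨J1, J2⟩ hp
    rw [Finset.HasAntidiagonal.mem_antidiagonal] at hp
    by_cases h1 : J1 = 0
    · subst h1
      have : MvPowerSeries.coeff (0 : Fin n →₀ ℕ) (F a) = 0 := by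
        rw [MvPowerSeries.coeff_zero_eq_constantCoeff]; exact hF0 a
      simp only [this, zero_mul, norm_zero]
      positivity
    · by_cases h2 : deg J2 < Multiset.card t
      · rw [coeff_msprod_eq_zero F hF0 t J2 h2, mul_zero]
        simp only [norm_zero]; positivity
      · push_neg at h2
        have hd : deg J1 + deg J2 = deg J := by rw [← hp, deg_add]
        have h1' : 1 ≤ deg J1 := one_le_deg h1
        have hcard : Multiset.card (a ::ₘ t) = Multiset.card t + 1 := by simp
        have hb1 : ‖MvPowerSeries.coeff J1 (F a)‖ ≤ C * A ^ deg J1 := by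
          apply hH a J1; omega
        have hb2 : ‖MvPowerSeries.coeff J2 ((t.map F).prod)‖ ≤
            D * C ^ Multiset.card t * A ^ deg J2 := by
          apply ih J2
          intro j J' hJ'
          apply hH j J'
          omega
        calc ‖MvPowerSeries.coeff J1 (F a) * MvPowerSeries.coeff J2 ((t.map F).prod)‖
            ≤ ‖MvPowerSeries.coeff J1 (F a)‖ * ‖MvPowerSeries.coeff J2 ((t.map F).prod)‖ :=
              norm_mul_le _ _
          _ ≤ (C * A ^ deg J1) * (D * C ^ Multiset.card t * A ^ deg J2) := by
              apply mul_le_mul hb1 hb2 (norm_nonneg _) (by positivity)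
          _ = D * C ^ Multiset.card (a ::ₘ t) * A ^ deg J := by
              rw [hcard, ← hd, pow_add, pow_succ]
              ring

lemma prod_zero_pow {σ : Type*} {S : Type*} [CommSemiring S] (u : σ →₀ ℕ) :
    (u.prod fun _ e => (0:S) ^ e) = if u = 0 then 1 else 0 := by
  classical
  rcases eq_or_ne u 0 with rfl | hu
  · simp
  · rw [if_neg hu]
    obtain ⟨k, hk⟩ := Finsupp.ne_iff.mp hu
    simp only [Finsupp.coe_zero, Pi.zero_apply] at hk
    refine Finset.prod_eq_zero (Finsupp.mem_support_iff.mpr hk) ?_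
    exact zero_pow hk

lemma eval_zero_pderiv {σ : Type*} {S : Type*} [CommRing S] (j : σ) (p : MvPolynomial σ S) :
    MvPolynomial.eval (fun _ => (0:S)) (MvPolynomial.pderiv j p) =
      p.coeff (Finsupp.single j 1) := by
  classical
  induction p using MvPolynomial.induction_on' with
  | add p q hp hq => rw [map_add, map_add, MvPolynomial.coeff_add, hp, hq]
  | monomial s a =>
    rw [MvPolynomial.pderiv_monomial, MvPolynomial.eval_monomial,
      MvPolynomial.coeff_monomial, prod_zero_pow]
    rcases eq_or_ne s (Finsupp.single j 1) with rfl | hs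
    · rw [if_pos rfl]
      simp
    · rw [if_neg hs]
      by_cases hsub : s - Finsupp.single j 1 = 0
      · rw [if_pos hsub, mul_one]
        have hle : s ≤ Finsupp.single j 1 := tsub_eq_zero_iff_le.mp hsub
        have hj : s j ≤ 1 := by simpa using Finsupp.le_def.mp hle j
        interval_cases h : s j
        · simp
        · exfalso
          apply hs
          ext x
          rcases eq_or_ne x j with rfl | hx
          · simp [h]
          · have := Finsupp.le_def.mp hle x
            simp only [Finsupp.single_apply, if_neg (Ne.symm hx)] at this ⊢
            omega
      · rw [if_neg hsub, mul_zero]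

end ImplicitAux

open ImplicitAux

theorem implicit_function_positive_radius_of_convergence
    {K : Type*} [NontriviallyNormedField K] [CompleteSpace K] [IsUltrametricDist K]
    {R : Type*} [NormedCommRing R] [NormedAlgebra K R] [CompleteSpace R] [IsUltrametricDist R]
    {n m : ℕ} (P : Fin m → MvPolynomial (Fin n ⊕ Fin m) R)
    (hP0 : ∀ i, MvPolynomial.eval (fun _ => (0 : R)) (P i) = 0)
    (hjac : IsUnit (Matrix.det (Matrix.of fun i j : Fin m =>
      MvPolynomial.eval (fun _ => (0 : R)) (MvPolynomial.pderiv (Sum.inr j) (P i)))))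
    (F : Fin m → MvPowerSeries (Fin n) R)
    (hF0 : ∀ j, MvPowerSeries.constantCoeff (F j) = 0)
    (hFP : ∀ i, MvPolynomial.aeval
      (Sum.elim (fun k => (MvPowerSeries.X k : MvPowerSeries (Fin n) R)) F) (P i) = 0) :
    ∃ r : ℝ, 0 < r ∧ ∀ ε : ℝ, 0 < ε →
      {q : Fin m × (Fin n →₀ ℕ) |
        ε ≤ ‖MvPowerSeries.coeff q.2 (F q.1)‖ * r ^ (q.2.sum fun _ k => k)}.Finite := by
  classical
  set B : Matrix (Fin m) (Fin m) R := Matrix.of fun i j : Fin m =>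
      MvPolynomial.eval (fun _ => (0 : R)) (MvPolynomial.pderiv (Sum.inr j) (P i)) with hBdef
  have hBdet : IsUnit B.det := hjac
  have hBI : B⁻¹ * B = 1 := Matrix.nonsing_inv_mul B hBdet
  set BI := B⁻¹ with hBIdef
  set Sd : ((Fin n ⊕ Fin m) →₀ ℕ) → (Fin n →₀ ℕ) :=
    fun d => (Finsupp.sumFinsuppEquivProdFinsupp d).1 with hSddef
  have hSd_apply : ∀ d (k : Fin n), Sd d k = d (Sum.inl k) := fun d k =>
    Finsupp.fst_sumFinsuppEquivProdFinsupp d k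
  set G : ((Fin n ⊕ Fin m) →₀ ℕ) → MvPowerSeries (Fin n) R :=
    fun d => ∏ j, F j ^ (d (Sum.inr j)) with hGdef
  set u : Fin m → ((Fin n ⊕ Fin m) →₀ ℕ) := fun j => Finsupp.single (Sum.inr j) 1 with hudef
  set term : Fin m → (Fin n →₀ ℕ) → ((Fin n ⊕ Fin m) →₀ ℕ) → R := fun i I d =>
    (P i).coeff d * (if Sd d ≤ I then MvPowerSeries.coeff (I - Sd d) (G d) else 0)
    with htermdef
  set img : Finset ((Fin n ⊕ Fin m) →₀ ℕ) := Finset.univ.image u with himgdef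
  set E : Fin m → (Fin n →₀ ℕ) → R := fun i I =>
    ∑ d ∈ (P i).support.filter (fun d => ¬ (d ∈ img)), term i I d with hEdef
  -- key identity
  have key1 : ∀ (i : Fin m) (I : Fin n →₀ ℕ), ∑ d ∈ (P i).support, term i I d = 0 := by
    intro i I
    have h0 := congrArg (MvPowerSeries.coeff I) (hFP i)
    rw [map_zero, MvPolynomial.aeval_def, MvPolynomial.eval₂_eq', map_sum] at h0
    rw [← h0]
    apply Finset.sum_congr rfl
    intro d _
    have hsplit : (∏ s : Fin n ⊕ Fin m,
        (Sum.elim (fun k => (MvPowerSeries.X k : MvPowerSeries (Fin n) R)) F s) ^ d s)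
        = MvPowerSeries.monomial (Sd d) 1 * G d := by
      rw [Fintype.prod_sum_type]
      congr 1
      · rw [← prod_X_pow (Sd d)]
        apply Finset.prod_congr rfl
        intro k _
        rw [hSd_apply]
        simp
    rw [hsplit]
    rw [MvPowerSeries.algebraMap_apply]
    simp only [Algebra.algebraMap_self, RingHom.id_apply]
    rw [MvPowerSeries.coeff_C_mul, MvPowerSeries.coeff_monomial_mul]
    simp only [htermdef, one_mul]
  have hterm_u : ∀ (i j : Fin m) (I : Fin n →₀ ℕ),
      term i I (u j) = B i j * MvPowerSeries.coeff I (F j) := by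
    intro i j I
    have hS : Sd (u j) = 0 := by
      ext k; rw [hSd_apply]; simp [hudef, Finsupp.single_apply]
    have hG : G (u j) = F j := by
      simp only [hGdef, hudef]
      rw [Finset.prod_eq_single j]
      · simp
      · intro b _ hb
        have hz : (Finsupp.single (Sum.inr j : Fin n ⊕ Fin m) 1) (Sum.inr b) = 0 := by
          rw [Finsupp.single_apply, if_neg]
          simp [Ne.symm hb]
        rw [hz, pow_zero]
      · intro h; exact absurd (Finset.mem_univ j) h
    have hc : (P i).coeff (u j) = B i j := by
      rw [hBdef]
      simp only [Matrix.of_apply]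
      rw [eval_zero_pderiv]
    simp only [htermdef, hS, hG, hc]
    rw [if_pos (zero_le (a := I)), tsub_zero]
  have key2 : ∀ (i : Fin m) (I : Fin n →₀ ℕ),
      (∑ j, B i j * MvPowerSeries.coeff I (F j)) + E i I = 0 := by
    intro i I
    have hsplit := Finset.sum_filter_add_sum_filter_not (P i).support
      (fun d => d ∈ img) (term i I)
    have hlin : ∑ d ∈ (P i).support.filter (fun d => d ∈ img), term i I d
        = ∑ j, B i j * MvPowerSeries.coeff I (F j) := by
      have hsub : (P i).support.filter (fun d => d ∈ img) ⊆ img :=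
        fun d hd => (Finset.mem_filter.mp hd).2
      rw [Finset.sum_subset hsub ?hz]
      case hz =>
        intro d hdimg hdnot
        by_cases hds : d ∈ (P i).support
        · exact absurd (Finset.mem_filter.mpr ⟨hds, hdimg⟩) hdnot
        · simp only [htermdef]
          rw [MvPolynomial.notMem_support_iff.mp hds, zero_mul]
      rw [himgdef]
      rw [Finset.sum_image ?hinj]
      case hinj =>
        intro x _ y _ hxy
        have := congrArg (fun f : (Fin n ⊕ Fin m) →₀ ℕ => f (Sum.inr x)) hxy
        simp only [hudef, Finsupp.single_apply] at this
        by_contra hne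
        simp only [Sum.inr.injEq, if_pos trivial, if_neg (Ne.symm hne)] at this
        exact one_ne_zero this
      exact Finset.sum_congr rfl fun j _ => hterm_u i j I
    rw [← key1 i I, ← hsplit, hlin]
  have hvec : ∀ I : Fin n →₀ ℕ, (fun j => MvPowerSeries.coeff I (F j))
      = BI.mulVec (fun i => - E i I) := by
    intro I
    have h1 : B.mulVec (fun j => MvPowerSeries.coeff I (F j)) = fun i => - E i I := by
      funext i
      have hmv : B.mulVec (fun j => MvPowerSeries.coeff I (F j)) i
          = ∑ j, B i j * MvPowerSeries.coeff I (F j) := by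
        simp [Matrix.mulVec, dotProduct]
      rw [hmv]
      exact eq_neg_of_add_eq_zero_left (key2 i I)
    calc (fun j => MvPowerSeries.coeff I (F j))
        = (1 : Matrix (Fin m) (Fin m) R).mulVec (fun j => MvPowerSeries.coeff I (F j)) :=
          (Matrix.one_mulVec _).symm
      _ = (BI * B).mulVec (fun j => MvPowerSeries.coeff I (F j)) := by rw [hBI]
      _ = BI.mulVec (B.mulVec (fun j => MvPowerSeries.coeff I (F j))) :=
          (Matrix.mulVec_mulVec _ _ _).symm
      _ = BI.mulVec (fun i => - E i I) := by rw [h1]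
  -- constants
  set D : ℝ := max 1 ‖(1:R)‖ with hDdef
  have hD1 : (1:ℝ) ≤ D := le_max_left _ _
  have hDn : ‖(1:R)‖ ≤ D := le_max_right _ _
  have hD0 : (0:ℝ) ≤ D := zero_le_one.trans hD1
  set CL : ℝ := 1 + ∑ i, ∑ j, ‖BI i j‖ with hCLdef
  have hCL1 : (1:ℝ) ≤ CL := le_add_of_nonneg_right (by positivity)
  have hCL0 : (0:ℝ) < CL := lt_of_lt_of_le one_pos hCL1
  have hCLe : ∀ i j : Fin m, ‖BI i j‖ ≤ CL := by
    intro i j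
    have h1 : ‖BI i j‖ ≤ ∑ j', ‖BI i j'‖ :=
      Finset.single_le_sum (f := fun j' => ‖BI i j'‖) (fun _ _ => norm_nonneg _)
        (Finset.mem_univ j)
    have h2 : (∑ j', ‖BI i j'‖) ≤ ∑ i', ∑ j', ‖BI i' j'‖ :=
      Finset.single_le_sum (f := fun i' => ∑ j', ‖BI i' j'‖)
        (fun _ _ => Finset.sum_nonneg fun _ _ => norm_nonneg _) (Finset.mem_univ i)
    calc ‖BI i j‖ ≤ ∑ i', ∑ j', ‖BI i' j'‖ := h1.trans h2
      _ ≤ CL := by rw [hCLdef]; linarith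
  set CP : ℝ := 1 + ∑ i, ∑ d ∈ (P i).support, ‖(P i).coeff d‖ with hCPdef
  have hCP1 : (1:ℝ) ≤ CP := le_add_of_nonneg_right (by positivity)
  have hCPe : ∀ (i : Fin m) (d : (Fin n ⊕ Fin m) →₀ ℕ), ‖(P i).coeff d‖ ≤ CP := by
    intro i d
    by_cases hd : d ∈ (P i).support
    · have h1 : ‖(P i).coeff d‖ ≤ ∑ d' ∈ (P i).support, ‖(P i).coeff d'‖ :=
        Finset.single_le_sum (f := fun d' => ‖(P i).coeff d'‖) (fun _ _ => norm_nonneg _) hd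
      have h2 : (∑ d' ∈ (P i).support, ‖(P i).coeff d'‖)
          ≤ ∑ i', ∑ d' ∈ (P i').support, ‖(P i').coeff d'‖ :=
        Finset.single_le_sum (f := fun i' => ∑ d' ∈ (P i').support, ‖(P i').coeff d'‖)
          (fun _ _ => Finset.sum_nonneg fun _ _ => norm_nonneg _) (Finset.mem_univ i)
      calc ‖(P i).coeff d‖ ≤ ∑ i', ∑ d' ∈ (P i').support, ‖(P i').coeff d'‖ := h1.trans h2
        _ ≤ CP := by rw [hCPdef]; linarith
    · rw [MvPolynomial.notMem_support_iff.mp hd, norm_zero]; linarith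
  set K0 : ℝ := CL * CP * D with hK0def
  have hK01 : (1:ℝ) ≤ K0 := by
    have := mul_le_mul (mul_le_mul hCL1 hCP1 zero_le_one (by linarith)) hD1 zero_le_one
      (by positivity)
    rw [hK0def]; nlinarith
  have hK00 : (0:ℝ) < K0 := lt_of_lt_of_le one_pos hK01
  set C : ℝ := K0⁻¹ with hCdef
  set A : ℝ := K0^2 with hAdef
  have hC0 : (0:ℝ) < C := by rw [hCdef]; positivity
  have hC1 : C ≤ 1 := by
    rw [hCdef]
    rw [inv_le_one_iff₀]
    right; exact hK01
  have hA1 : (1:ℝ) ≤ A := by rw [hAdef]; nlinarith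
  have hA0 : (0:ℝ) < A := lt_of_lt_of_le one_pos hA1
  have hK0C : K0 * C = 1 := by rw [hCdef]; exact mul_inv_cancel₀ (ne_of_gt hK00)
  have hCA : C * A = K0 := by
    rw [hCdef, hAdef, sq, ← mul_assoc, inv_mul_cancel₀ (ne_of_gt hK00), one_mul]
  -- main inductive bound
  have main : ∀ (N : ℕ) (I : Fin n →₀ ℕ), deg I = N → ∀ j : Fin m,
      ‖MvPowerSeries.coeff I (F j)‖ ≤ C * A ^ N := by
    intro N
    induction N using Nat.strong_induction_on with
    | _ N ih =>
    intro I hIN j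
    rcases Nat.eq_zero_or_pos N with rfl | hNpos
    · have hI0 : I = 0 := (deg_eq_zero_iff I).mp hIN
      subst hI0
      have hz : MvPowerSeries.coeff (0 : Fin n →₀ ℕ) (F j) = 0 := by
        rw [MvPowerSeries.coeff_zero_eq_constantCoeff]; exact hF0 j
      rw [hz, norm_zero, pow_zero, mul_one]
      exact le_of_lt hC0
    · obtain ⟨N', rfl⟩ : ∃ N', N = N' + 1 := ⟨N - 1, (Nat.succ_pred_eq_of_pos hNpos).symm⟩
      have hIHlt : ∀ (J : Fin n →₀ ℕ), deg J < N' + 1 → ∀ j' : Fin m,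
          ‖MvPowerSeries.coeff J (F j')‖ ≤ C * A ^ deg J :=
        fun J hJ j' => ih (deg J) hJ J rfl j'
      have hCAN : C * A ^ (N' + 1) = K0 * A ^ N' := by
        rw [pow_succ, ← hCA]; ring
      have hcoeff : MvPowerSeries.coeff I (F j) = ∑ i, BI j i * (- E i I) := by
        have h := congrFun (hvec I) j
        rw [h]
        simp [Matrix.mulVec, dotProduct]
      rw [hcoeff]
      apply IsUltrametricDist.norm_sum_le_of_forall_le_of_nonneg (by positivity)
      intro i _
      have hEb : ‖E i I‖ ≤ (C * A ^ (N' + 1)) / CL := by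
        rw [hEdef]
        apply IsUltrametricDist.norm_sum_le_of_forall_le_of_nonneg (by positivity)
        intro d hd
        rw [Finset.mem_filter] at hd
        obtain ⟨hdsupp, hdnimg⟩ := hd
        rw [le_div_iff₀ hCL0]
        by_cases hle : Sd d ≤ I
        swap
        · simp only [htermdef, if_neg hle, mul_zero, norm_zero, zero_mul]
          positivity
        · set J : Fin n →₀ ℕ := I - Sd d with hJdef
          have hJadd : J + Sd d = I := tsub_add_cancel_of_le hle
          have hdegsplit : deg J + deg (Sd d) = N' + 1 := by
            rw [← hIN, ← hJadd, deg_add]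
          set t : ℕ := ∑ j', d (Sum.inr j') with htdef
          set ms : Multiset (Fin m) :=
            Finset.univ.val.bind (fun j' : Fin m => Multiset.replicate (d (Sum.inr j')) j')
            with hmsdef
          have hmscard : Multiset.card ms = t := by
            rw [hmsdef, Multiset.card_bind]
            simp only [Function.comp, Multiset.card_replicate]
            rfl
          have hmsprod : ((ms.map F).prod) = G d := by
            rw [hmsdef, Multiset.map_bind, Multiset.prod_bind]
            simp only [Multiset.map_replicate, Multiset.prod_replicate]
            rw [hGdef]
            rfl
          have hterm_eq : term i I d
              = (P i).coeff d * MvPowerSeries.coeff J ((ms.map F).prod) := by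
            simp only [htermdef, if_pos hle, hmsprod, hJdef]
          rw [hterm_eq]
          rcases Nat.eq_zero_or_pos t with ht0 | htpos
          · have hG1 : ((ms.map F).prod) = 1 := by
              have hms0 : ms = 0 := Multiset.card_eq_zero.mp (by rw [hmscard, ht0])
              rw [hms0]; simp
            rw [hG1]
            have hco : ‖MvPowerSeries.coeff J (1 : MvPowerSeries (Fin n) R)‖ ≤ D := by
              rw [MvPowerSeries.coeff_one]
              by_cases hJ0 : J = 0
              · rw [if_pos hJ0]; exact hDn
              · rw [if_neg hJ0, norm_zero]; exact hD0
            calc ‖(P i).coeff d * MvPowerSeries.coeff J (1 : MvPowerSeries (Fin n) R)‖ * CL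
                ≤ (CP * D) * CL := by
                  apply mul_le_mul_of_nonneg_right ?_ (le_of_lt hCL0)
                  exact le_trans (norm_mul_le _ _)
                    (mul_le_mul (hCPe i d) hco (norm_nonneg _) (by linarith))
              _ = K0 := by rw [hK0def]; ring
              _ ≤ K0 * A ^ N' := le_mul_of_one_le_right (le_of_lt hK00) (one_le_pow₀ hA1)
              _ = C * A ^ (N' + 1) := hCAN.symm
          · by_cases hS0 : Sd d = 0
            · -- rule out t = 1
              have ht2 : 2 ≤ t := by
                by_contra hlt
                push_neg at hlt
                have ht1 : t = 1 := by omega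
                apply hdnimg
                have hex : ∃ j₀ : Fin m, d (Sum.inr j₀) ≠ 0 := by
                  by_contra hno
                  push_neg at hno
                  have hzz : t = 0 := by
                    rw [htdef]
                    exact Finset.sum_eq_zero fun j' _ => hno j'
                  omega
                obtain ⟨j₀, hj₀⟩ := hex
                have hsum1 : ∑ j', d (Sum.inr j') = 1 := by rw [← htdef, ht1]
                have herase : d (Sum.inr j₀)
                    + ∑ j' ∈ Finset.univ.erase j₀, d (Sum.inr j') = 1 :=
                  (Finset.add_sum_erase Finset.univ (fun j' => d (Sum.inr j'))
                    (Finset.mem_univ j₀)).trans hsum1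
                have hj₀1 : d (Sum.inr j₀) = 1 := by omega
                have hrest : ∀ j' : Fin m, j' ≠ j₀ → d (Sum.inr j') = 0 := by
                  intro j' hj'
                  have h0 : ∑ j'' ∈ Finset.univ.erase j₀, d (Sum.inr j'') = 0 := by omega
                  exact (Finset.sum_eq_zero_iff.mp h0) j'
                    (Finset.mem_erase.mpr ⟨hj', Finset.mem_univ _⟩)
                have hdu : d = u j₀ := by
                  ext s
                  rcases s with k | j'
                  · have hzk : d (Sum.inl k) = 0 := by
                      rw [← hSd_apply d k, hS0]; rfl
                    rw [hzk, hudef]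
                    simp [Finsupp.single_apply]
                  · rcases eq_or_ne j' j₀ with rfl | hne
                    · rw [hj₀1, hudef]; simp
                    · rw [hrest j' hne, hudef]
                      simp [Finsupp.single_apply, (Ne.symm hne : ¬ j₀ = j')]
                rw [himgdef, hdu]
                exact Finset.mem_image_of_mem u (Finset.mem_univ j₀)
              have hJI : J = I := by rw [hJdef, hS0, tsub_zero]
              have hdegJ : deg J = N' + 1 := by rw [hJI, hIN]
              have hH : ∀ (j' : Fin m) (J' : Fin n →₀ ℕ),
                  deg J' + Multiset.card ms ≤ deg J + 1 →
                  ‖MvPowerSeries.coeff J' (F j')‖ ≤ C * A ^ deg J' := by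
                intro j' J' hJ'
                apply hIHlt
                rw [hmscard] at hJ'
                omega
              have hml := coeff_msprod_le F hF0 (le_of_lt hC0) hA1 hD1 hDn ms J hH
              rw [hmscard, hdegJ] at hml
              have hCt : C ^ t ≤ C ^ 2 := pow_le_pow_of_le_one (le_of_lt hC0) hC1 ht2
              calc ‖(P i).coeff d * MvPowerSeries.coeff J ((ms.map F).prod)‖ * CL
                  ≤ (CP * (D * C ^ t * A ^ (N' + 1))) * CL := by
                    apply mul_le_mul_of_nonneg_right ?_ (le_of_lt hCL0)
                    exact le_trans (norm_mul_le _ _)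
                      (mul_le_mul (hCPe i d) hml (norm_nonneg _) (by linarith))
                _ ≤ (CP * (D * C ^ 2 * A ^ (N' + 1))) * CL := by gcongr
                _ = (K0 * C) * (C * A ^ (N' + 1)) := by rw [hK0def, sq]; ring
                _ = C * A ^ (N' + 1) := by rw [hK0C, one_mul]
            · have hdegS : 1 ≤ deg (Sd d) := one_le_deg hS0
              have hdegJ : deg J ≤ N' := by omega
              have hH : ∀ (j' : Fin m) (J' : Fin n →₀ ℕ),
                  deg J' + Multiset.card ms ≤ deg J + 1 →
                  ‖MvPowerSeries.coeff J' (F j')‖ ≤ C * A ^ deg J' := by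
                intro j' J' hJ'
                apply hIHlt
                rw [hmscard] at hJ'
                omega
              have hml := coeff_msprod_le F hF0 (le_of_lt hC0) hA1 hD1 hDn ms J hH
              rw [hmscard] at hml
              have hCt : C ^ t ≤ C := by
                calc C ^ t ≤ C ^ 1 := pow_le_pow_of_le_one (le_of_lt hC0) hC1 htpos
                  _ = C := pow_one C
              have hAJ : A ^ deg J ≤ A ^ N' := pow_le_pow_right₀ hA1 hdegJ
              calc ‖(P i).coeff d * MvPowerSeries.coeff J ((ms.map F).prod)‖ * CL
                  ≤ (CP * (D * C ^ t * A ^ deg J)) * CL := by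
                    apply mul_le_mul_of_nonneg_right ?_ (le_of_lt hCL0)
                    exact le_trans (norm_mul_le _ _)
                      (mul_le_mul (hCPe i d) hml (norm_nonneg _) (by linarith))
                _ ≤ (CP * (D * C * A ^ N')) * CL := by gcongr
                _ = (K0 * C) * A ^ N' := by rw [hK0def]; ring
                _ = A ^ N' := by rw [hK0C, one_mul]
                _ ≤ K0 * A ^ N' := le_mul_of_one_le_left (by positivity) hK01
                _ = C * A ^ (N' + 1) := hCAN.symm
      calc ‖BI j i * - E i I‖ = ‖BI j i * E i I‖ := by rw [mul_neg, norm_neg]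
        _ ≤ ‖BI j i‖ * ‖E i I‖ := norm_mul_le _ _
        _ ≤ CL * ((C * A ^ (N' + 1)) / CL) :=
            mul_le_mul (hCLe j i) hEb (norm_nonneg _) (le_of_lt hCL0)
        _ = C * A ^ (N' + 1) := by field_simp
  -- conclusion
  refine ⟨(2 * A)⁻¹, by positivity, ?_⟩
  intro ε hε
  obtain ⟨N₀, hN₀⟩ := exists_pow_lt_of_lt_one (show (0:ℝ) < ε / C from div_pos hε hC0)
    (show (1:ℝ)/2 < 1 by norm_num)
  set cN : Fin n →₀ ℕ := Finsupp.equivFunOnFinite.symm (fun _ => N₀) with hcNdef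
  apply Set.Finite.subset ((Set.finite_univ (α := Fin m)).prod (Finset.Iic cN).finite_toSet)
  rintro ⟨j, J⟩ hq
  simp only [Set.mem_setOf_eq] at hq
  have hdJ : (J.sum fun _ k => k) = deg J := rfl
  rw [hdJ] at hq
  have hb := main (deg J) J rfl j
  have hrle : ‖MvPowerSeries.coeff J (F j)‖ * ((2*A)⁻¹) ^ deg J
      ≤ C * (1/2 : ℝ) ^ deg J := by
    rw [inv_pow]
    calc ‖MvPowerSeries.coeff J (F j)‖ * ((2*A) ^ deg J)⁻¹
        ≤ (C * A ^ deg J) * ((2*A) ^ deg J)⁻¹ :=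
          mul_le_mul_of_nonneg_right hb (by positivity)
      _ = C * (1/2 : ℝ) ^ deg J := by
          rw [mul_pow, div_pow, one_pow]
          have h2 : ((2:ℝ) ^ deg J) ≠ 0 := by positivity
          have hA' : (A ^ deg J : ℝ) ≠ 0 := by positivity
          field_simp
  have hεle : ε ≤ C * (1/2 : ℝ) ^ deg J := le_trans hq hrle
  have hdegle : deg J ≤ N₀ := by
    by_contra hcon
    push_neg at hcon
    have h2 : ((1:ℝ)/2) ^ deg J ≤ (1/2 : ℝ) ^ N₀ :=
      pow_le_pow_of_le_one (by norm_num) (by norm_num) (le_of_lt hcon)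
    have hlt : (1/2 : ℝ) ^ N₀ * C < ε := (lt_div_iff₀ hC0).mp hN₀
    have hmono : C * (1/2 : ℝ) ^ deg J ≤ C * (1/2 : ℝ) ^ N₀ :=
      mul_le_mul_of_nonneg_left h2 (le_of_lt hC0)
    nlinarith
  refine ⟨Set.mem_univ _, ?_⟩
  simp only [Finset.coe_Iic, Set.mem_Iic]
  rw [Finsupp.le_def]
  intro k
  have hck : cN k = N₀ := by rw [hcNdef]; rfl
  rw [hck]
  exact le_trans (apply_le_deg J k) hdegle
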